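/- Let 0<τ1≤τ2<1 and λ≥0, and let θ̂^{(1)}∈S^{τ1} and θ̂^{(2)}∈S^{τ2} be quantile TVD solutions at levels τ1 and τ2 respectively (with a common tuning parameter λ). Define θ̃^{(1)} = θ̂^{(1)} ∧ θ̂^{(2)} (coordinatewise minimum) and θ̃^{(2)} = θ̂^{(1)} ∨ θ̂^{(2)} (coordinatewise maximum). Then θ̃^{(1)}∈S^{τ1} and θ̃^{(2)}∈S^{τ2}. -/

import Mathlib

open scoped BigOperators

noncomputable section

namespace QTVD

/-- Quantile (check) loss `ρ_τ(x) = max{τx, (τ-1)x}`. -/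
def qloss (τ x : ℝ) : ℝ := max (τ * x) ((τ - 1) * x)

/-- Total variation `TV(θ) = ∑ |θ_{i+1} - θ_i|` (coordinates indexed `0,…,n-1`). -/
def TV {n : ℕ} (θ : Fin n → ℝ) : ℝ :=
  ∑ i : Fin n, if h : (i : ℕ) + 1 < n then |θ ⟨(i : ℕ) + 1, h⟩ - θ i| else 0

/-- Quantile TVD objective. -/
def obj {n : ℕ} (τ lam : ℝ) (y θ : Fin n → ℝ) : ℝ :=
  (∑ i : Fin n, qloss τ (y i - θ i)) + lam * TV θ

/-- Quantile TVD solution set `S^τ`. -/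
def sol {n : ℕ} (τ lam : ℝ) (y : Fin n → ℝ) : Set (Fin n → ℝ) :=
  {θ | ∀ η : Fin n → ℝ, obj τ lam y θ ≤ obj τ lam y η}

/-- `k`-th smallest entry of `y` restricted to `I` (as extended real;
`⊥` if `k ≤ 0`, `⊤` if `k ≥ |I| + 1`). -/
def orderStat {n : ℕ} (y : Fin n → ℝ) (I : Finset (Fin n)) (k : ℤ) : EReal :=
  if k ≤ 0 then ⊥
  else if (I.card : ℤ) < k then ⊤
  else (((I.val.map y).sort (· ≤ ·)).getD (k.toNat - 1) 0 : ℝ)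

/-- The constant `C_{I,J}` for discrete intervals `I=[c:d] ⊆ J=[a:b] ⊆ [0:n-1]`
(0-based indexing; 1-based `[s:t] ⊆ [j1:j2] ⊆ [1:n]` corresponds to
`c = s-1, d = t-1, a = j1-1, b = j2-1`). -/
def Cconst (n c d a b : ℕ) : ℝ :=
  if 0 < a ∧ b < n - 1 then
    if a < c ∧ d < b then 1 else if c = a ∧ d = b then -1 else 0
  else if a = 0 ∧ b < n - 1 then
    if a < c ∧ d < b then 1 else if c = a ∧ d = b then -(1/2)
      else if c = 0 ∧ d < b then 1/2 else 0
  else if 0 < a ∧ b = n - 1 then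
    if a < c ∧ d < b then 1 else if c = a ∧ d = b then -(1/2)
      else if a < c ∧ d = b then 1/2 else 0
  else
    if a < c ∧ d < b then 1 else if c = a ∧ d = b then 0 else 1/2

/-- `u^τ_{I,J} = τ|I| - 2λ C_{I,J}` for `I=[c:d] ⊆ J=[a:b]`. -/
def uIJ (τ lam : ℝ) (n c d a b : ℕ) : ℝ :=
  τ * ((d : ℝ) - (c : ℝ) + 1) - 2 * lam * Cconst n c d a b

/-- `l^τ_{I,J} = τ|I| + 2λ C_{I,J}` for `I=[c:d] ⊆ J=[a:b]`. -/
def lIJ (τ lam : ℝ) (n c d a b : ℕ) : ℝ :=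
  τ * ((d : ℝ) - (c : ℝ) + 1) + 2 * lam * Cconst n c d a b

/-- Upper envelope `U^τ_i`: min over intervals `J ∋ i` of the max over
subintervals `I ⊆ J` with `i ∈ I` of `y_{I,(⌊u^τ_{I,J}⌋+1)}`. -/
def Uenv {n : ℕ} (τ lam : ℝ) (y : Fin n → ℝ) (i : Fin n) : EReal :=
  ⨅ (a : Fin n) (b : Fin n) (_ : a ≤ i) (_ : i ≤ b),
    ⨆ (c : Fin n) (d : Fin n) (_ : a ≤ c) (_ : c ≤ i) (_ : i ≤ d) (_ : d ≤ b),
      orderStat y (Finset.Icc c d) (⌊uIJ τ lam n (c : ℕ) (d : ℕ) (a : ℕ) (b : ℕ)⌋ + 1)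

/-- Lower envelope `L^τ_i`: max over intervals `J ∋ i` of the min over
subintervals `I ⊆ J` with `i ∈ I` of `y_{I,(⌈l^τ_{I,J}⌉)}`. -/
def Lenv {n : ℕ} (τ lam : ℝ) (y : Fin n → ℝ) (i : Fin n) : EReal :=
  ⨆ (a : Fin n) (b : Fin n) (_ : a ≤ i) (_ : i ≤ b),
    ⨅ (c : Fin n) (d : Fin n) (_ : a ≤ c) (_ : c ≤ i) (_ : i ≤ d) (_ : d ≤ b),
      orderStat y (Finset.Icc c d) ⌈lIJ τ lam n (c : ℕ) (d : ℕ) (a : ℕ) (b : ℕ)⌉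

/-- Admissible dual (KKT) variables `(g, z)` for a candidate solution `θ`.
`z` is indexed by `Fin (n+1)` (so `z 0,…,z n` with `z 0 = z n = 0`); the
edge between coordinates `j` and `j+1` (0-based) corresponds to `z (j+1)`. -/
def IsDual {n : ℕ} (τ lam : ℝ) (y θ : Fin n → ℝ) (g : Fin n → ℝ)
    (z : Fin (n + 1) → ℝ) : Prop :=
  z 0 = 0 ∧ z (Fin.last n) = 0 ∧
  (∀ j : Fin n, ∀ h : (j : ℕ) + 1 < n,
    (θ ⟨(j : ℕ) + 1, h⟩ < θ j → z j.succ = lam) ∧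
    (θ j = θ ⟨(j : ℕ) + 1, h⟩ → -lam ≤ z j.succ ∧ z j.succ ≤ lam) ∧
    (θ j < θ ⟨(j : ℕ) + 1, h⟩ → z j.succ = -lam)) ∧
  (∀ j : Fin n,
    (θ j < y j → g j = -τ) ∧
    (θ j = y j → -τ ≤ g j ∧ g j ≤ 1 - τ) ∧
    (y j < θ j → g j = 1 - τ)) ∧
  (∀ a b : Fin n, a ≤ b → (∑ j ∈ Finset.Icc a b, g j) = z a.castSucc - z b.succ)

/-- `sign_+(x) = 1` if `x ≥ 0`, `-1` if `x < 0`. -/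
def signP (x : ℝ) : ℝ := if 0 ≤ x then 1 else -1

/-- `sign_-(x) = 1` if `x > 0`, `-1` if `x ≤ 0`. -/
def signM (x : ℝ) : ℝ := if 0 < x then 1 else -1

/-- Submodularity with respect to the coordinatewise lattice structure on `ℝ^n`. -/
def Submodular {n : ℕ} (P : (Fin n → ℝ) → ℝ) : Prop :=
  ∀ x y : Fin n → ℝ, P (x ⊔ y) + P (x ⊓ y) ≤ P x + P y

/-- Penalized quantile regression objective with a general penalty `P`. -/
def Gobj {n : ℕ} (τ lam : ℝ) (y : Fin n → ℝ) (P : (Fin n → ℝ) → ℝ)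
    (θ : Fin n → ℝ) : ℝ :=
  (∑ j : Fin n, qloss τ (y j - θ j)) + lam * P θ

end QTVD
section Aux

lemma qloss_eq (τ x : ℝ) : QTVD.qloss τ x = τ * x + max 0 (-x) := by
  unfold QTVD.qloss
  rcases le_total 0 x with h | h
  · rw [max_eq_left (by nlinarith), max_eq_left (by linarith)]; ring
  · rw [max_eq_right (by nlinarith), max_eq_right (by linarith)]; ring

lemma abs_sum_helper (u v p q : ℝ) (hs : p + q = u + v) (hd : |p - q| ≤ |u - v|) :
    |p| + |q| ≤ |u| + |v| := by
  have h1 : |p + q| ≤ |u| + |v| := by rw [hs]; exact abs_add_le u v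
  have h2 : |u - v| ≤ |u| + |v| := by
    rw [sub_eq_add_neg]; exact (abs_add_le u (-v)).trans (by rw [abs_neg])
  have h3 := le_abs_self (p + q); have h4 := neg_abs_le (p + q)
  have h5 := le_abs_self (p - q); have h6 := neg_abs_le (p - q)
  rcases abs_cases p with ⟨e1, s1⟩ | ⟨e1, s1⟩ <;>
    rcases abs_cases q with ⟨e2, s2⟩ | ⟨e2, s2⟩ <;> rw [e1, e2] <;> linarith

lemma abs_lattice_key (a b a' b' : ℝ) :
    |min a' b' - min a b| + |max a' b' - max a b| ≤ |a' - a| + |b' - b| := by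
  apply abs_sum_helper
  · have h1 := min_add_max a b
    have h2 := min_add_max a' b'
    linarith
  · have h1 : max a b - min a b = |b - a| := by
      have := max_sub_min_eq_abs a b; simpa using this
    have h2 : max a' b' - min a' b' = |b' - a'| := by
      have := max_sub_min_eq_abs a' b'; simpa using this
    have h3 := abs_abs_sub_abs_le_abs_sub (b' - a') (b - a)
    have e : (min a' b' - min a b) - (max a' b' - max a b) = -(|b' - a'| - |b - a|) := by
      linarith
    rw [e, abs_neg]
    calc |(|b' - a'| - |b - a|)| ≤ |(b' - a') - (b - a)| := h3
      _ = |(a' - a) - (b' - b)| := by rw [abs_sub_comm]; ring_nf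

lemma loss_key {τ₁ τ₂ : ℝ} (hτ : τ₁ ≤ τ₂) (v a b : ℝ) :
    QTVD.qloss τ₁ (v - min a b) + QTVD.qloss τ₂ (v - max a b) ≤
      QTVD.qloss τ₁ (v - a) + QTVD.qloss τ₂ (v - b) := by
  rcases le_total a b with h | h
  · rw [min_eq_left h, max_eq_right h]
  · rw [min_eq_right h, max_eq_left h, qloss_eq, qloss_eq, qloss_eq, qloss_eq]
    nlinarith [mul_nonneg (sub_nonneg.2 hτ) (sub_nonneg.2 h)]

lemma TV_submod {n : ℕ} (a b : Fin n → ℝ) :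
    QTVD.TV (a ⊓ b) + QTVD.TV (a ⊔ b) ≤ QTVD.TV a + QTVD.TV b := by
  unfold QTVD.TV
  rw [← Finset.sum_add_distrib, ← Finset.sum_add_distrib]
  apply Finset.sum_le_sum
  intro i _
  by_cases h : (i : ℕ) + 1 < n
  · simp only [h, dif_pos, Pi.inf_apply, Pi.sup_apply]
    exact abs_lattice_key (a i) (b i) (a ⟨(i : ℕ) + 1, h⟩) (b ⟨(i : ℕ) + 1, h⟩)
  · simp [h]

end Aux

/-- Cross-level lattice property for quantile TVD.
For `0 < τ₁ ≤ τ₂ < 1` and a common tuning parameter `λ ≥ 0`, if `θ̂⁽¹⁾ ∈ S^{τ₁}`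
and `θ̂⁽²⁾ ∈ S^{τ₂}`, then `θ̂⁽¹⁾ ⊓ θ̂⁽²⁾ ∈ S^{τ₁}` and `θ̂⁽¹⁾ ⊔ θ̂⁽²⁾ ∈ S^{τ₂}`. -/
theorem quantile_tvd_cross_level_lattice
    {n : ℕ} (τ₁ τ₂ lam : ℝ)
    (hτ1 : 0 < τ₁) (hτ12 : τ₁ ≤ τ₂) (hτ2 : τ₂ < 1) (hlam : 0 ≤ lam)
    (y : Fin n → ℝ)
    (θ₁ : Fin n → ℝ) (hθ₁ : θ₁ ∈ QTVD.sol τ₁ lam y)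
    (θ₂ : Fin n → ℝ) (hθ₂ : θ₂ ∈ QTVD.sol τ₂ lam y) :
    θ₁ ⊓ θ₂ ∈ QTVD.sol τ₁ lam y ∧ θ₁ ⊔ θ₂ ∈ QTVD.sol τ₂ lam y := by
  have key : QTVD.obj τ₁ lam y (θ₁ ⊓ θ₂) + QTVD.obj τ₂ lam y (θ₁ ⊔ θ₂) ≤
      QTVD.obj τ₁ lam y θ₁ + QTVD.obj τ₂ lam y θ₂ := by
    unfold QTVD.obj
    have hloss : (∑ i : Fin n, QTVD.qloss τ₁ (y i - (θ₁ ⊓ θ₂) i)) +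
        (∑ i : Fin n, QTVD.qloss τ₂ (y i - (θ₁ ⊔ θ₂) i)) ≤
        (∑ i : Fin n, QTVD.qloss τ₁ (y i - θ₁ i)) +
        (∑ i : Fin n, QTVD.qloss τ₂ (y i - θ₂ i)) := by
      rw [← Finset.sum_add_distrib, ← Finset.sum_add_distrib]
      apply Finset.sum_le_sum
      intro i _
      simpa [Pi.inf_apply, Pi.sup_apply] using
        loss_key hτ12 (y i) (θ₁ i) (θ₂ i)
    have htv := TV_submod θ₁ θ₂
    nlinarith [mul_le_mul_of_nonneg_left htv hlam]
  have h1 := hθ₁ (θ₁ ⊓ θ₂)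
  have h2 := hθ₂ (θ₁ ⊔ θ₂)
  have e1 : QTVD.obj τ₁ lam y (θ₁ ⊓ θ₂) = QTVD.obj τ₁ lam y θ₁ := by linarith
  have e2 : QTVD.obj τ₂ lam y (θ₁ ⊔ θ₂) = QTVD.obj τ₂ lam y θ₂ := by linarith
  constructor
  · intro η; rw [e1]; exact hθ₁ η
  · intro η; rw [e2]; exact hθ₂ η
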